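/- Assume n ≥ 4 and |V₁ − V₂| ≤ ξ·n·p·γ/3 for some ξ with ξ ≥ (1/(2n))·max(4, 1/w_min). Then ‖B̄ − R‖₂ ≤ (2/3)·ξ·n·p·γ. Moreover, if V₁ = V₂ then ‖B̄ − R‖₂ ≤ pγ/3. -/

import Mathlib

open Matrix Finset

noncomputable section

def opNorm {k l : ℕ} (A : Matrix (Fin k) (Fin l) ℝ) : ℝ :=
  ‖(Matrix.toEuclideanLin A).toContinuousLinearMap‖

def ip {n : ℕ} (A B : Matrix (Fin n) (Fin n) ℝ) : ℝ := Matrix.trace (Aᵀ * B)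

def ell1Norm {k l : ℕ} (M : Matrix (Fin k) (Fin l) ℝ) : ℝ := ∑ i, ∑ j, |M i j|

def frobNorm {k l : ℕ} (M : Matrix (Fin k) (Fin l) ℝ) : ℝ :=
  Real.sqrt (∑ i, ∑ j, (M i j) ^ 2)

def euclNorm {k : ℕ} (x : Fin k → ℝ) : ℝ := Real.sqrt (∑ i, x i ^ 2)

def En (n : ℕ) : Matrix (Fin n) (Fin n) ℝ := Matrix.of fun _ _ => 1

def centering (n : ℕ) : Matrix (Fin n) (Fin n) ℝ := 1 - ((n : ℝ)⁻¹) • En n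

def Mopt (n : ℕ) : Set (Matrix (Fin n) (Fin n) ℝ) :=
  {Z | Z.PosSemidef ∧ ∀ i, Z i i = 1}

def MGplus (n : ℕ) : Set (Matrix (Fin n) (Fin n) ℝ) :=
  {Z | Z.PosSemidef ∧ ∀ i, Z i i ≤ 1}

def MoptPlus (n : ℕ) : Set (Matrix (Fin n) (Fin n) ℝ) :=
  {Z | Z.PosSemidef ∧ (∀ i, Z i i = 1) ∧ ip (En n) Z = 0}

def u2 (n n₁ : ℕ) : Fin n → ℝ := fun j => if (j : ℕ) < n₁ then 1 else -1

def Zstar (n n₁ : ℕ) : Matrix (Fin n) (Fin n) ℝ :=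
  Matrix.vecMulVec (u2 n n₁) (u2 n n₁)

def wmin (n n₁ n₂ : ℕ) : ℝ := min ((n₁ : ℝ) / n) ((n₂ : ℝ) / n)

def vref (n n₁ n₂ : ℕ) : Fin n → ℝ :=
  fun j => if (j : ℕ) < n₁ then (n₂ : ℝ) / n else -((n₁ : ℝ) / n)

def Rmat (n n₁ n₂ p : ℕ) (γ : ℝ) : Matrix (Fin n) (Fin n) ℝ :=
  ((p : ℝ) * γ) • Matrix.vecMulVec (vref n n₁ n₂) (vref n n₁ n₂)

def Dmat (n n₁ : ℕ) (V₁ V₂ : ℝ) : Matrix (Fin n) (Fin n) ℝ :=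
  Matrix.diagonal fun j => if (j : ℕ) < n₁ then V₁ else V₂

def Gbar (n n₁ n₂ p : ℕ) (γ V₁ V₂ : ℝ) : Matrix (Fin n) (Fin n) ℝ :=
  centering n * Dmat n n₁ V₁ V₂ * centering n + Rmat n n₁ n₂ p γ

def taubar (n n₁ n₂ p : ℕ) (γ V₁ V₂ : ℝ) : ℝ :=
  Matrix.trace (Gbar n n₁ n₂ p γ V₁ V₂) / n

def lambar (n n₁ n₂ p : ℕ) (γ V₁ V₂ : ℝ) : ℝ :=
  ((∑ i, ∑ j, Gbar n n₁ n₂ p γ V₁ V₂ i j) - Matrix.trace (Gbar n n₁ n₂ p γ V₁ V₂)) /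
    ((n : ℝ) * ((n : ℝ) - 1))

def Bbar (n n₁ n₂ p : ℕ) (γ V₁ V₂ : ℝ) : Matrix (Fin n) (Fin n) ℝ :=
  Gbar n n₁ n₂ p γ V₁ V₂ - lambar n n₁ n₂ p γ V₁ V₂ • (En n - 1) -
    taubar n n₁ n₂ p γ V₁ V₂ • (1 : Matrix (Fin n) (Fin n) ℝ)

def W0 (n n₁ n₂ : ℕ) (V₁ V₂ : ℝ) : Matrix (Fin n) (Fin n) ℝ :=
  Matrix.diagonal fun j => if (j : ℕ) < n₁ then (V₁ - V₂) * ((n₂ : ℝ) / n)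
    else -((V₁ - V₂) * ((n₁ : ℝ) / n))

def blockDiagE (n n₁ : ℕ) : Matrix (Fin n) (Fin n) ℝ :=
  Matrix.of fun i j =>
    if (i : ℕ) < n₁ ∧ (j : ℕ) < n₁ then 1
    else if n₁ ≤ (i : ℕ) ∧ n₁ ≤ (j : ℕ) then -1 else 0

def W2m (n n₁ : ℕ) (V₁ V₂ : ℝ) : Matrix (Fin n) (Fin n) ℝ :=
  ((V₁ - V₂) / n) • blockDiagE n n₁

def Wbb (n n₁ n₂ : ℕ) (V₁ V₂ : ℝ) : Matrix (Fin n) (Fin n) ℝ :=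
  W2m n n₁ V₁ V₂ + ((V₁ - V₂) * ((n₂ : ℝ) / n - (n₁ : ℝ) / n) / n) • En n



section AuxBias

lemma auxOpNorm_mul_le {n : ℕ} (A B : Matrix (Fin n) (Fin n) ℝ) :
    opNorm (A*B) ≤ opNorm A * opNorm B := by
  unfold opNorm
  have h : (Matrix.toEuclideanLin (A*B)).toContinuousLinearMap
      = (Matrix.toEuclideanLin A).toContinuousLinearMap.comp
        (Matrix.toEuclideanLin B).toContinuousLinearMap := by
    ext x
    simp [Matrix.toEuclideanLin_apply, Matrix.mulVec_mulVec]
  rw [h]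
  exact ContinuousLinearMap.opNorm_comp_le _ _

lemma auxEuclid_norm_eq {n : ℕ} (x : EuclideanSpace ℝ (Fin n)) :
    ‖x‖ = Real.sqrt (∑ i, (x i)^2) := by
  simp [EuclideanSpace.norm_eq, Real.norm_eq_abs, sq_abs]

lemma auxToEuclideanLin_apply {n : ℕ} (A : Matrix (Fin n) (Fin n) ℝ)
    (x : EuclideanSpace ℝ (Fin n)) (i : Fin n) :
    Matrix.toEuclideanLin A x i = ∑ j, A i j * x j := by
  simp [Matrix.toEuclideanLin_apply, Matrix.mulVec, dotProduct]

lemma auxOpNorm_le_bound {n : ℕ} (A : Matrix (Fin n) (Fin n) ℝ) (c : ℝ) (hc : 0 ≤ c)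
    (h : ∀ x : EuclideanSpace ℝ (Fin n), ‖Matrix.toEuclideanLin A x‖ ≤ c * ‖x‖) :
    opNorm A ≤ c :=
  ContinuousLinearMap.opNorm_le_bound _ hc h

lemma auxOpNorm_nonneg {n : ℕ} (A : Matrix (Fin n) (Fin n) ℝ) : 0 ≤ opNorm A :=
  norm_nonneg _

lemma auxOpNorm_diagonal_le {n : ℕ} (d : Fin n → ℝ) (c : ℝ) (hc : 0 ≤ c)
    (h : ∀ i, |d i| ≤ c) : opNorm (Matrix.diagonal d) ≤ c := by
  apply auxOpNorm_le_bound _ c hc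
  intro x
  rw [auxEuclid_norm_eq, auxEuclid_norm_eq]
  have h1 : ∀ i : Fin n, (Matrix.toEuclideanLin (Matrix.diagonal d) x i)^2 ≤ c^2 * (x i)^2 := by
    intro i
    have hdi : Matrix.toEuclideanLin (Matrix.diagonal d) x i = d i * x i := by
      rw [auxToEuclideanLin_apply]
      simp [Matrix.diagonal_apply, ite_mul, Finset.sum_ite_eq]
    rw [hdi, mul_pow]
    have h2 : (d i)^2 ≤ c^2 := by
      have := pow_le_pow_left₀ (abs_nonneg (d i)) (h i) 2
      rwa [sq_abs] at this
    exact mul_le_mul_of_nonneg_right h2 (sq_nonneg (x i))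
  calc Real.sqrt (∑ i, (Matrix.toEuclideanLin (Matrix.diagonal d) x i)^2)
      ≤ Real.sqrt (∑ i, c^2 * (x i)^2) := Real.sqrt_le_sqrt (Finset.sum_le_sum fun i _ => h1 i)
    _ = c * Real.sqrt (∑ i, (x i)^2) := by
        rw [← Finset.mul_sum, Real.sqrt_mul (sq_nonneg c), Real.sqrt_sq hc]

lemma auxOpNorm_centering_le_one {n : ℕ} (hn : 0 < n) : opNorm (centering n) ≤ 1 := by
  apply auxOpNorm_le_bound _ 1 zero_le_one
  intro x
  rw [one_mul, auxEuclid_norm_eq, auxEuclid_norm_eq]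
  apply Real.sqrt_le_sqrt
  have hx : ∀ i : Fin n, Matrix.toEuclideanLin (centering n) x i = x i - (∑ j, x j) / n := by
    intro i
    rw [auxToEuclideanLin_apply]
    simp only [centering, Matrix.sub_apply, Matrix.one_apply, Matrix.smul_apply, En,
      Matrix.of_apply, smul_eq_mul, mul_one, sub_mul, ite_mul, one_mul, zero_mul]
    rw [Finset.sum_sub_distrib, ← Finset.mul_sum]
    simp [Finset.sum_ite_eq, div_eq_inv_mul]
  calc ∑ i, (Matrix.toEuclideanLin (centering n) x i)^2
      = ∑ i, (x i - (∑ j, x j) / n)^2 :=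
        Finset.sum_congr rfl fun i _ => by rw [hx i]
    _ = (∑ i, (x i)^2) - 2*((∑ j, x j)/n)*(∑ j, x j) + n*((∑ j, x j)/n)^2 := by
        simp only [sub_sq]
        rw [Finset.sum_add_distrib, Finset.sum_sub_distrib, Finset.sum_const, ← Finset.sum_mul,
          Finset.card_univ, Fintype.card_fin, nsmul_eq_mul, ← Finset.mul_sum]
        ring
    _ ≤ ∑ i, (x i)^2 := by
        have hn' : (0:ℝ) < n := Nat.cast_pos.mpr hn
        rw [div_pow]
        have e1 : 2*((∑ j, x j)/n)*(∑ j, x j) = 2*((∑ j, x j)^2/n) := by ring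
        rw [e1]
        have h2 : (n:ℝ)*((∑ j, x j)^2/(n:ℝ)^2) = (∑ j, x j)^2/n := by
          field_simp
        rw [h2]
        have h3 : 0 ≤ (∑ j, x j)^2/(n:ℝ) := div_nonneg (sq_nonneg _) hn'.le
        linarith

lemma auxSum_ite_fin (n₁ n₂ : ℕ) (x y : ℝ) :
    ∑ j : Fin (n₁ + n₂), (if (j : ℕ) < n₁ then x else y) = n₁ * x + n₂ * y := by
  rw [Fin.sum_univ_eq_sum_range (fun j => if j < n₁ then x else y)]
  rw [Finset.range_eq_Ico, ← Finset.sum_Ico_consecutive _ (Nat.zero_le n₁) (Nat.le_add_right n₁ n₂)]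
  have h1 : ∑ j ∈ Finset.Ico 0 n₁, (if j < n₁ then x else y) = n₁ * x := by
    rw [Finset.sum_congr rfl (fun j hj => if_pos (Finset.mem_Ico.mp hj).2)]
    simp [mul_comm]
  have h2 : ∑ j ∈ Finset.Ico n₁ (n₁+n₂), (if j < n₁ then x else y) = n₂ * y := by
    rw [Finset.sum_congr rfl (fun j hj => if_neg (by
      have := (Finset.mem_Ico.mp hj).1; omega))]
    simp [mul_comm]
  rw [h1, h2]

lemma auxConj_apply {n : ℕ} (d : Fin n → ℝ) (i j : Fin n) :
    (centering n * Matrix.diagonal d * centering n) i j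
      = (if i = j then d i else 0) - d i / n - d j / n + (∑ k, d k) / (n^2 : ℝ) := by
  have hC : ∀ a b : Fin n, centering n a b = (if a = b then (1:ℝ) else 0) - (n:ℝ)⁻¹ := by
    intro a b; simp [centering, En, Matrix.one_apply]
  rw [Matrix.mul_apply]
  have hAD : ∀ k : Fin n, (centering n * Matrix.diagonal d) i k = centering n i k * d k :=
    fun k => Matrix.mul_diagonal ..
  have key : ∀ k : Fin n,
      (centering n * Matrix.diagonal d) i k * centering n k j
      = ((if i = k then (if k = j then d k else 0) else 0)
        - (n:ℝ)⁻¹ * (if i = k then d k else 0))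
        - (n:ℝ)⁻¹ * (if k = j then d k else 0)
        + (n:ℝ)⁻¹ * ((n:ℝ)⁻¹ * d k) := by
    intro k
    rw [hAD k, hC i k, hC k j]
    by_cases h2 : k = j
    · subst h2; by_cases h1 : i = k <;> simp [h1] <;> ring
    · by_cases h1 : i = k <;> simp [h1, h2] <;> ring
  rw [Finset.sum_congr rfl (fun k _ => key k)]
  rw [Finset.sum_add_distrib, Finset.sum_sub_distrib, Finset.sum_sub_distrib,
    ← Finset.mul_sum, ← Finset.mul_sum, ← Finset.mul_sum]
  by_cases hij : i = j <;>
    simp [hij, Finset.sum_ite_eq, Finset.sum_ite_eq', div_eq_inv_mul, sq, ← Finset.mul_sum] <;> ring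

set_option maxHeartbeats 1600000 in
lemma auxBbar_eq (n₁ n₂ p : ℕ) (γ V₁ V₂ : ℝ) (hn₁ : 0 < n₁) (hn₂ : 0 < n₂) :
    Bbar (n₁+n₂) n₁ n₂ p γ V₁ V₂ - Rmat (n₁+n₂) n₁ n₂ p γ
      = centering (n₁+n₂) * Matrix.diagonal (fun j : Fin (n₁+n₂) =>
          (if (j:ℕ) < n₁ then (V₁-V₂)*(n₂:ℝ)/((n₁:ℝ)+(n₂:ℝ)) else -((V₁-V₂)*(n₁:ℝ)/((n₁:ℝ)+(n₂:ℝ))))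
          - (p:ℝ)*γ*(n₁:ℝ)*(n₂:ℝ)/(((n₁:ℝ)+(n₂:ℝ))*(((n₁:ℝ)+(n₂:ℝ))-1))) * centering (n₁+n₂) := by
  set N : ℕ := n₁ + n₂ with hNdef
  have hNR : (N:ℝ) = (n₁:ℝ) + (n₂:ℝ) := by push_cast [hNdef]; ring
  have hN0 : (0:ℝ) < (N:ℝ) := Nat.cast_pos.mpr (by omega)
  have hN1 : (N:ℝ) - 1 ≠ 0 := by
    have h2 : (2:ℕ) ≤ N := by omega
    have : (2:ℝ) ≤ (N:ℝ) := by exact_mod_cast h2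
    linarith
  have hN0' : (N:ℝ) ≠ 0 := ne_of_gt hN0
  set dfun : Fin N → ℝ := fun j => if (j:ℕ) < n₁ then V₁ else V₂ with hdfun
  set vfun : Fin N → ℝ := vref N n₁ n₂ with hvfun
  have hG : ∀ i j : Fin N, Gbar N n₁ n₂ p γ V₁ V₂ i j
      = ((if i = j then dfun i else 0) - dfun i/(N:ℝ) - dfun j/(N:ℝ)
          + (∑ k, dfun k)/((N:ℝ)^2)) + ((p:ℝ)*γ*vfun i) * vfun j := by
    intro i j
    have hD : Dmat N n₁ V₁ V₂ = Matrix.diagonal dfun := rfl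
    simp only [Gbar, Matrix.add_apply, hD, auxConj_apply]
    simp [Rmat, Matrix.vecMulVec_apply, hvfun]
    ring
  have hS : ∑ k, dfun k = (n₁:ℝ)*V₁ + (n₂:ℝ)*V₂ := auxSum_ite_fin n₁ n₂ V₁ V₂
  have hvsum : ∑ k, vfun k = 0 := by
    have h := auxSum_ite_fin n₁ n₂ ((n₂:ℝ)/(N:ℝ)) (-((n₁:ℝ)/(N:ℝ)))
    have h2 : ∑ k, vfun k = (n₁:ℝ)*((n₂:ℝ)/(N:ℝ)) + (n₂:ℝ)*(-((n₁:ℝ)/(N:ℝ))) := h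
    rw [h2]; ring
  have htr : Matrix.trace (Gbar N n₁ n₂ p γ V₁ V₂)
      = ((n₁:ℝ)*V₁ + (n₂:ℝ)*V₂)*((N:ℝ)-1)/(N:ℝ) + (p:ℝ)*γ*(n₁:ℝ)*(n₂:ℝ)/(N:ℝ) := by
    have hdiag : ∀ i : Fin N, Gbar N n₁ n₂ p γ V₁ V₂ i i
        = if (i:ℕ) < n₁ then
            (V₁ - V₁/(N:ℝ) - V₁/(N:ℝ) + ((n₁:ℝ)*V₁ + (n₂:ℝ)*V₂)/((N:ℝ)^2)
              + (p:ℝ)*γ*((n₂:ℝ)/(N:ℝ))*((n₂:ℝ)/(N:ℝ)))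
          else
            (V₂ - V₂/(N:ℝ) - V₂/(N:ℝ) + ((n₁:ℝ)*V₁ + (n₂:ℝ)*V₂)/((N:ℝ)^2)
              + (p:ℝ)*γ*(-((n₁:ℝ)/(N:ℝ)))*(-((n₁:ℝ)/(N:ℝ)))) := by
      intro i
      rw [hG i i, hS]
      by_cases hi : (i:ℕ) < n₁ <;> simp [hdfun, hvfun, vref, hi] <;> ring
    rw [Matrix.trace]
    calc ∑ i, (Gbar N n₁ n₂ p γ V₁ V₂).diag i
        = ∑ i : Fin N, (if (i:ℕ) < n₁ then
            (V₁ - V₁/(N:ℝ) - V₁/(N:ℝ) + ((n₁:ℝ)*V₁ + (n₂:ℝ)*V₂)/((N:ℝ)^2)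
              + (p:ℝ)*γ*((n₂:ℝ)/(N:ℝ))*((n₂:ℝ)/(N:ℝ)))
          else
            (V₂ - V₂/(N:ℝ) - V₂/(N:ℝ) + ((n₁:ℝ)*V₁ + (n₂:ℝ)*V₂)/((N:ℝ)^2)
              + (p:ℝ)*γ*(-((n₁:ℝ)/(N:ℝ)))*(-((n₁:ℝ)/(N:ℝ))))) :=
          Finset.sum_congr rfl fun i _ => hdiag i
      _ = ((n₁:ℝ)*V₁ + (n₂:ℝ)*V₂)*((N:ℝ)-1)/(N:ℝ) + (p:ℝ)*γ*(n₁:ℝ)*(n₂:ℝ)/(N:ℝ) := by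
          rw [auxSum_ite_fin]
          field_simp
          rw [hNR]; ring
  have hrow : ∀ i : Fin N, ∑ j, Gbar N n₁ n₂ p γ V₁ V₂ i j = 0 := by
    intro i
    rw [Finset.sum_congr rfl fun j _ => hG i j]
    rw [Finset.sum_add_distrib, Finset.sum_add_distrib, Finset.sum_sub_distrib,
      Finset.sum_sub_distrib, ← Finset.mul_sum]
    simp only [Finset.sum_ite_eq', Finset.sum_ite_eq, Finset.mem_univ, if_true, Finset.sum_const,
      Finset.card_univ, Fintype.card_fin, nsmul_eq_mul, ← Finset.sum_div, hvsum, mul_zero]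
    rw [hS]
    field_simp
    ring
  have hsum : ∑ i, ∑ j, Gbar N n₁ n₂ p γ V₁ V₂ i j = 0 := by simp [hrow]
  have htau : taubar N n₁ n₂ p γ V₁ V₂
      = (((n₁:ℝ)*V₁ + (n₂:ℝ)*V₂)*((N:ℝ)-1)/(N:ℝ) + (p:ℝ)*γ*(n₁:ℝ)*(n₂:ℝ)/(N:ℝ))/(N:ℝ) := by
    rw [taubar, htr]
  have hlam : lambar N n₁ n₂ p γ V₁ V₂
      = -(((n₁:ℝ)*V₁ + (n₂:ℝ)*V₂)*((N:ℝ)-1)/(N:ℝ) + (p:ℝ)*γ*(n₁:ℝ)*(n₂:ℝ)/(N:ℝ))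
          /((N:ℝ)*((N:ℝ)-1)) := by
    rw [lambar, hsum, htr]; ring
  ext i j
  have hRHS := auxConj_apply (n := N) (fun j : Fin N =>
      (if (j:ℕ) < n₁ then (V₁-V₂)*(n₂:ℝ)/((n₁:ℝ)+(n₂:ℝ)) else -((V₁-V₂)*(n₁:ℝ)/((n₁:ℝ)+(n₂:ℝ))))
      - (p:ℝ)*γ*(n₁:ℝ)*(n₂:ℝ)/(((n₁:ℝ)+(n₂:ℝ))*(((n₁:ℝ)+(n₂:ℝ))-1))) i j
  have hasum : (∑ k : Fin N, ((if (k:ℕ) < n₁ then (V₁-V₂)*(n₂:ℝ)/((n₁:ℝ)+(n₂:ℝ)) else -((V₁-V₂)*(n₁:ℝ)/((n₁:ℝ)+(n₂:ℝ))))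
      - (p:ℝ)*γ*(n₁:ℝ)*(n₂:ℝ)/(((n₁:ℝ)+(n₂:ℝ))*(((n₁:ℝ)+(n₂:ℝ))-1))))
      = (n₁:ℝ)*((V₁-V₂)*(n₂:ℝ)/((n₁:ℝ)+(n₂:ℝ)) - (p:ℝ)*γ*(n₁:ℝ)*(n₂:ℝ)/(((n₁:ℝ)+(n₂:ℝ))*(((n₁:ℝ)+(n₂:ℝ))-1)))
        + (n₂:ℝ)*(-((V₁-V₂)*(n₁:ℝ)/((n₁:ℝ)+(n₂:ℝ))) - (p:ℝ)*γ*(n₁:ℝ)*(n₂:ℝ)/(((n₁:ℝ)+(n₂:ℝ))*(((n₁:ℝ)+(n₂:ℝ))-1))) := by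
    have h := auxSum_ite_fin n₁ n₂
      ((V₁-V₂)*(n₂:ℝ)/((n₁:ℝ)+(n₂:ℝ)) - (p:ℝ)*γ*(n₁:ℝ)*(n₂:ℝ)/(((n₁:ℝ)+(n₂:ℝ))*(((n₁:ℝ)+(n₂:ℝ))-1)))
      (-((V₁-V₂)*(n₁:ℝ)/((n₁:ℝ)+(n₂:ℝ))) - (p:ℝ)*γ*(n₁:ℝ)*(n₂:ℝ)/(((n₁:ℝ)+(n₂:ℝ))*(((n₁:ℝ)+(n₂:ℝ))-1)))
    rw [← h]
    apply Finset.sum_congr rfl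
    intro k _
    by_cases hk : (k:ℕ) < n₁ <;> simp [hk]
  rw [hRHS, hasum]
  simp only [Bbar, Matrix.sub_apply, Matrix.smul_apply, Matrix.one_apply, En, Matrix.of_apply,
    smul_eq_mul]
  rw [hG i j, htau, hlam]
  have hvi : vfun i = if (i:ℕ) < n₁ then (n₂:ℝ)/(N:ℝ) else -((n₁:ℝ)/(N:ℝ)) := rfl
  have hvj : vfun j = if (j:ℕ) < n₁ then (n₂:ℝ)/(N:ℝ) else -((n₁:ℝ)/(N:ℝ)) := rfl
  have hRij : Rmat N n₁ n₂ p γ i j = ((p:ℝ)*γ*vfun i) * vfun j := by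
    simp [Rmat, Matrix.vecMulVec_apply, hvfun]; ring
  rw [hRij, hS, hvi, hvj]
  have e1 : (0:ℝ) < (n₁:ℝ) := Nat.cast_pos.mpr hn₁
  have e2 : (0:ℝ) < (n₂:ℝ) := Nat.cast_pos.mpr hn₂
  rw [hNR] at hN1 ⊢
  by_cases hij : i = j
  · subst hij
    by_cases hi : (i:ℕ) < n₁ <;>
      simp only [hdfun, if_pos rfl, eq_self_iff_true, if_true, hi, if_false] <;>
      field_simp <;> ring
  · by_cases hi : (i:ℕ) < n₁ <;> by_cases hj : (j:ℕ) < n₁ <;>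
      simp only [hdfun, if_neg hij, hi, hj, if_true, if_false] <;>
      field_simp <;> ring

end AuxBias

set_option maxHeartbeats 1000000 in
/-- operator-norm bound on the bias `B̄ - R` under (A2). -/
theorem bias_opNorm_bound (n n₁ n₂ p : ℕ) (γ V₁ V₂ ξ : ℝ)
    (hn : n = n₁ + n₂) (hn₁ : 0 < n₁) (hn₂ : 0 < n₂) (hp : 1 ≤ p) (hγ : 0 < γ)
    (hn4 : 4 ≤ n)
    (hA2 : |V₁ - V₂| ≤ ξ * n * p * γ / 3)
    (hξ : (1 / (2 * (n : ℝ))) * max 4 (1 / wmin n n₁ n₂) ≤ ξ) :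
    opNorm (Bbar n n₁ n₂ p γ V₁ V₂ - Rmat n n₁ n₂ p γ) ≤ (2 / 3) * ξ * n * p * γ ∧
    (V₁ = V₂ →
      opNorm (Bbar n n₁ n₂ p γ V₁ V₂ - Rmat n n₁ n₂ p γ) ≤ (p : ℝ) * γ / 3) := by
  subst hn
  set N : ℕ := n₁ + n₂ with hNdef
  have hNR : (N:ℝ) = (n₁:ℝ) + (n₂:ℝ) := by push_cast [hNdef]; ring
  have hN0 : (0:ℝ) < (N:ℝ) := Nat.cast_pos.mpr (by omega)
  have hN4 : (4:ℝ) ≤ (N:ℝ) := by exact_mod_cast hn4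
  have hN1 : (0:ℝ) < (N:ℝ) - 1 := by linarith
  have hp1 : (1:ℝ) ≤ (p:ℝ) := by exact_mod_cast hp
  have hpγ : 0 < (p:ℝ)*γ := mul_pos (by linarith) hγ
  have e1 : (0:ℝ) < (n₁:ℝ) := Nat.cast_pos.mpr hn₁
  have e2 : (0:ℝ) < (n₂:ℝ) := Nat.cast_pos.mpr hn₂
  have key : ∀ c : ℝ, |V₁ - V₂| + (p:ℝ)*γ/3 ≤ c →
      opNorm (Bbar N n₁ n₂ p γ V₁ V₂ - Rmat N n₁ n₂ p γ) ≤ c := by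
    intro c hcb
    have hc0 : 0 ≤ c := le_trans (by positivity) hcb
    rw [auxBbar_eq n₁ n₂ p γ V₁ V₂ hn₁ hn₂]
    set afun : Fin N → ℝ := fun j =>
      (if (j:ℕ) < n₁ then (V₁-V₂)*(n₂:ℝ)/((n₁:ℝ)+(n₂:ℝ)) else -((V₁-V₂)*(n₁:ℝ)/((n₁:ℝ)+(n₂:ℝ))))
        - (p:ℝ)*γ*(n₁:ℝ)*(n₂:ℝ)/(((n₁:ℝ)+(n₂:ℝ))*(((n₁:ℝ)+(n₂:ℝ))-1)) with hafun
    have ht0 : 0 ≤ (p:ℝ)*γ*(n₁:ℝ)*(n₂:ℝ)/(((n₁:ℝ)+(n₂:ℝ))*(((n₁:ℝ)+(n₂:ℝ))-1)) := by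
      rw [hNR] at hN1
      positivity
    have ht : (p:ℝ)*γ*(n₁:ℝ)*(n₂:ℝ)/(((n₁:ℝ)+(n₂:ℝ))*(((n₁:ℝ)+(n₂:ℝ))-1)) ≤ (p:ℝ)*γ/3 := by
      rw [hNR] at hN1 hN4
      rw [div_le_div_iff₀ (by nlinarith) (by norm_num)]
      nlinarith [sq_nonneg ((n₁:ℝ)-(n₂:ℝ)), mul_pos hpγ (mul_pos e1 e2), hpγ.le,
        mul_le_mul_of_nonneg_left hN4 hpγ.le]
    have habs : ∀ j : Fin N, |afun j| ≤ c := by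
      intro j
      have hd : |(if (j:ℕ) < n₁ then (V₁-V₂)*(n₂:ℝ)/((n₁:ℝ)+(n₂:ℝ))
          else -((V₁-V₂)*(n₁:ℝ)/((n₁:ℝ)+(n₂:ℝ))))| ≤ |V₁ - V₂| := by
        by_cases hj : (j:ℕ) < n₁
        · rw [if_pos hj, abs_div, abs_mul, abs_of_nonneg e2.le,
            abs_of_nonneg (by linarith : (0:ℝ) ≤ (n₁:ℝ)+(n₂:ℝ))]
          rw [div_le_iff₀ (by linarith)]
          nlinarith [abs_nonneg (V₁ - V₂)]
        · rw [if_neg hj, abs_neg, abs_div, abs_mul, abs_of_nonneg e1.le,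
            abs_of_nonneg (by linarith : (0:ℝ) ≤ (n₁:ℝ)+(n₂:ℝ))]
          rw [div_le_iff₀ (by linarith)]
          nlinarith [abs_nonneg (V₁ - V₂)]
      calc |afun j| ≤ |(if (j:ℕ) < n₁ then (V₁-V₂)*(n₂:ℝ)/((n₁:ℝ)+(n₂:ℝ))
              else -((V₁-V₂)*(n₁:ℝ)/((n₁:ℝ)+(n₂:ℝ))))|
            + |(p:ℝ)*γ*(n₁:ℝ)*(n₂:ℝ)/(((n₁:ℝ)+(n₂:ℝ))*(((n₁:ℝ)+(n₂:ℝ))-1))| := abs_sub _ _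
        _ ≤ |V₁ - V₂| + (p:ℝ)*γ/3 := by
            rw [abs_of_nonneg ht0]; exact add_le_add hd ht
        _ ≤ c := hcb
    have hdiag : opNorm (Matrix.diagonal afun) ≤ c := auxOpNorm_diagonal_le afun c hc0 habs
    have hCn : opNorm (centering N) ≤ 1 := auxOpNorm_centering_le_one (by omega)
    calc opNorm (centering N * Matrix.diagonal afun * centering N)
        ≤ opNorm (centering N * Matrix.diagonal afun) * opNorm (centering N) :=
          auxOpNorm_mul_le _ _
      _ ≤ (opNorm (centering N) * opNorm (Matrix.diagonal afun)) * opNorm (centering N) :=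
          mul_le_mul_of_nonneg_right (auxOpNorm_mul_le _ _) (auxOpNorm_nonneg _)
      _ ≤ (1 * c) * 1 := by
          apply mul_le_mul _ hCn (auxOpNorm_nonneg _) (by linarith)
          exact mul_le_mul hCn hdiag (auxOpNorm_nonneg _) zero_le_one
      _ = c := by ring
  have h6 : 2 / (N:ℝ) ≤ ξ := by
    have h4 : (4:ℝ) ≤ max 4 (1 / wmin N n₁ n₂) := le_max_left _ _
    have h5 : (1 / (2 * (N:ℝ))) * 4 ≤ (1 / (2 * (N:ℝ))) * max 4 (1 / wmin N n₁ n₂) :=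
      mul_le_mul_of_nonneg_left h4 (by positivity)
    have he : (1 / (2 * (N:ℝ))) * 4 = 2 / (N:ℝ) := by field_simp; ring
    linarith [le_trans h5 hξ]
  have hξ0 : 0 < ξ := lt_of_lt_of_le (by positivity) h6
  have hξ2 : 2 ≤ ξ * (N:ℝ) := by
    rw [div_le_iff₀ hN0] at h6
    linarith
  constructor
  · apply key
    have h7 : 2*((p:ℝ)*γ) ≤ ξ*(N:ℝ)*((p:ℝ)*γ) := mul_le_mul_of_nonneg_right hξ2 hpγ.le
    have h8 : 0 ≤ ξ*(N:ℝ)*(p:ℝ)*γ := by positivity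
    linarith [hA2, h7, h8]
  · intro hV
    apply key
    rw [hV, sub_self, abs_zero, zero_add]


end
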